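/- Let x = u ∘ v ∘ w and y = u ∘ ṽ ∘ w be binary sequences (concatenations of the blocks u, v, w and u, ṽ, w). Then D_t(x) ∩ D_s(y) = ⋃_{p+q ≤ min(t,s)} D_p(u) ∘ (D_{t-p-q}(v) ∩ D_{s-p-q}(ṽ)) ∘ D_q(w), where A ∘ B ∘ C denotes the set of concatenations a∘b∘c with a ∈ A, b ∈ B, c ∈ C. -/
import Mathlib


/-- The `t`-deletion ball of a binary sequence `x`: all subsequences of `x`
of length `|x| - t` (i.e., obtained by deleting exactly `t` symbols). -/
def delBall (t : ℕ) (x : List Bool) : Set (List Bool) :=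
  {z | z.Sublist x ∧ z.length + t = x.length}

/-- Levenshtein (deletion) distance between binary sequences. -/
noncomputable def levDist (x y : List Bool) : ℕ :=
  sInf {r | ((delBall r x) ∩ (delBall r y)).Nonempty}

/-- The alternating binary sequence of length `n` starting with `1` (= `true`). -/
def altSeq (n : ℕ) : List Bool :=
  (List.range n).map (fun k => decide (k % 2 = 0))

/-- Bitwise complement of a binary sequence. -/
def compl' (x : List Bool) : List Bool := x.map (fun b => !b)

/-- Elementwise concatenation of sets of sequences. -/
def setConcat (A B : Set (List Bool)) : Set (List Bool) :=
  Set.image2 (· ++ ·) A B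

lemma split_max (z u m : List Bool) (h : z.Sublist (u ++ m)) :
    ∃ a r : List Bool, z = a ++ r ∧ a.Sublist u ∧
      ∀ m' : List Bool, z.Sublist (u ++ m') → r.Sublist m' := by
  classical
  set P : ℕ → Prop := fun n => (z.take n).Sublist u with hP
  have h0 : P 0 := by simp [hP]
  set k := Nat.findGreatest P z.length with hk
  have hku : (z.take k).Sublist u := Nat.findGreatest_spec (Nat.zero_le _) h0
  refine ⟨z.take k, z.drop k, (z.take_append_drop k).symm, hku, ?_⟩
  intro m' hm'
  obtain ⟨a₁, r₁, hz, ha₁, hr₁⟩ := List.sublist_append_iff.1 hm'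
  have hlen : a₁.length ≤ z.length := by
    subst hz; simp
  have htake : z.take a₁.length = a₁ := by
    subst hz; simp
  have hmem : P a₁.length := by rw [hP]; simpa [htake] using ha₁
  have hle : a₁.length ≤ k := Nat.le_findGreatest hlen hmem
  have hdz : z.drop a₁.length = r₁ := by subst hz; simp
  have : z.drop k = r₁.drop (k - a₁.length) := by
    rw [← hdz, List.drop_drop, Nat.add_sub_cancel' hle]
  rw [this]
  exact (List.drop_sublist _ _).trans hr₁

lemma split_max' (r m w : List Bool) (h : r.Sublist (m ++ w)) :
    ∃ b c : List Bool, r = b ++ c ∧ c.Sublist w ∧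
      ∀ m' : List Bool, r.Sublist (m' ++ w) → b.Sublist m' := by
  have h' : r.reverse.Sublist (w.reverse ++ m.reverse) := by
    simpa [List.reverse_append] using h.reverse
  obtain ⟨a, r', hsplit, haw, key⟩ := split_max r.reverse w.reverse m.reverse h'
  refine ⟨r'.reverse, a.reverse, ?_, by simpa using haw.reverse, ?_⟩
  · have := congrArg List.reverse hsplit
    simpa [List.reverse_append] using this
  · intro m' hm'
    have : r.reverse.Sublist (w.reverse ++ m'.reverse) := by
      simpa [List.reverse_append] using hm'.reverse
    simpa using (key m'.reverse this).reverse

/-- Decomposition of the intersection of deletion balls of two sequences with a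
common prefix `u` and common suffix `w`. -/
theorem stmt4 (t s : ℕ) (u v vt w : List Bool) :
    delBall t (u ++ v ++ w) ∩ delBall s (u ++ vt ++ w)
      = ⋃ (p : ℕ) (q : ℕ) (_ : p + q ≤ min t s),
          setConcat (delBall p u)
            (setConcat (delBall (t - p - q) v ∩ delBall (s - p - q) vt) (delBall q w)) := by
  ext z
  simp only [setConcat, Set.mem_inter_iff, Set.mem_iUnion, Set.mem_image2, delBall,
    Set.mem_setOf_eq]
  constructor
  · rintro ⟨⟨hx, hxl⟩, ⟨hy, hyl⟩⟩
    have hx' : z.Sublist (u ++ (v ++ w)) := by simpa [List.append_assoc] using hx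
    have hy' : z.Sublist (u ++ (vt ++ w)) := by simpa [List.append_assoc] using hy
    obtain ⟨a, r, hz, hau, key⟩ := split_max z u (v ++ w) hx'
    have hrv : r.Sublist (v ++ w) := key _ hx'
    have hrvt : r.Sublist (vt ++ w) := key _ hy'
    obtain ⟨b, c, hr, hcw, key'⟩ := split_max' r v w hrv
    have hbv : b.Sublist v := key' _ hrv
    have hbvt : b.Sublist vt := key' _ hrvt
    have hal : a.length ≤ u.length := hau.length_le
    have hcl : c.length ≤ w.length := hcw.length_le
    have hbl : b.length ≤ v.length := hbv.length_le
    have hbl' : b.length ≤ vt.length := hbvt.length_le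
    have hzl : z.length = a.length + b.length + c.length := by
      subst hz hr; simp [List.length_append]; omega
    simp only [List.length_append] at hxl hyl
    refine ⟨u.length - a.length, w.length - c.length, ?_, a, ⟨hau, by omega⟩,
      b ++ c, ⟨b, ⟨⟨hbv, by omega⟩, ⟨hbvt, by omega⟩⟩, c, ⟨hcw, by omega⟩, rfl⟩, ?_⟩
    · omega
    · rw [hz, hr]
  · rintro ⟨p, q, hpq, a, ⟨hau, hal⟩, _, ⟨b, ⟨⟨hbv, hblv⟩, ⟨hbvt, hblvt⟩⟩,
      c, ⟨hcw, hcl⟩, rfl⟩, rfl⟩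
    have h1 : (a ++ (b ++ c)).Sublist ((u ++ v) ++ w) := by
      simpa [List.append_assoc] using hau.append (hbv.append hcw)
    have h2 : (a ++ (b ++ c)).Sublist ((u ++ vt) ++ w) := by
      simpa [List.append_assoc] using hau.append (hbvt.append hcw)
    exact ⟨⟨h1, by simp [List.length_append]; omega⟩,
      ⟨h2, by simp [List.length_append]; omega⟩⟩
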